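/- Let A = ℂ[a_1,…,a_{3m+2}]/I, where I is generated by a_{3m+1} − a_i·a_{m+i} for 1 ≤ i ≤ m, a_{3m+2} − a_i·a_{2m+i} for 1 ≤ i ≤ m, and all products a_i a_j (1 ≤ i ≤ j ≤ 3m+2) not occurring in the above generators. Then A is a local ℂ-algebra of dimension 3m+3 with Hilbert function (1, 3m, 2). -/

import Mathlib

open MvPolynomial Finsupp

variable {σ : Type*} [DecidableEq σ] (q : MvPolynomial σ ℂ)

lemma coeff0_mulX (c : σ) : coeff 0 (q * X c) = 0 := by
  rw [coeff_mul_X']; simp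

lemma coeff0_mm (a b : σ) : coeff 0 (q * X a * X b) = 0 := by
  rw [coeff_mul_X']; simp

lemma coeff1_mulX (j c : σ) :
    coeff (single j 1) (q * X c) = if c = j then coeff 0 q else 0 := by
  rw [coeff_mul_X']
  by_cases h : c = j
  · subst h; simp
  · simp [Finsupp.single_apply_eq_zero, h, Ne.symm h]

lemma coeff1_mm (j a b : σ) : coeff (single j 1) (q * X a * X b) = 0 := by
  rw [coeff_mul_X']
  by_cases h : b = j
  · subst h; simp [coeff0_mulX]
  · simp [Finsupp.single_apply_eq_zero, h, Ne.symm h]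

lemma coeff2_mulX (u w c : σ) (hcu : c ≠ u) (hcw : c ≠ w) :
    coeff (single u 1 + single w 1) (q * X c) = 0 := by
  rw [coeff_mul_X']
  simp [Finsupp.mem_support_iff, Finsupp.single_apply_eq_zero, hcu, hcw, Ne.symm hcu, Ne.symm hcw]

lemma coeff2_mm (u w a b : σ) (huw : u ≠ w) :
    coeff (single u 1 + single w 1) (q * X a * X b) =
      if (a = u ∧ b = w) ∨ (a = w ∧ b = u) then coeff 0 q else 0 := by
  have hsub₁ : (single u 1 + single w 1) - single w 1 = (single u 1 : σ →₀ ℕ) := by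
    rw [add_tsub_cancel_right]
  have hsub₂ : (single u 1 + single w 1) - single u 1 = (single w 1 : σ →₀ ℕ) := by
    rw [add_comm, add_tsub_cancel_right]
  rw [coeff_mul_X']
  by_cases hb : b = w
  · subst hb
    simp only [Finsupp.mem_support_iff, Finsupp.add_apply, Finsupp.single_apply]
    rw [if_pos (by simp [Ne.symm huw]), hsub₁, coeff1_mulX]
    by_cases ha : a = u
    · simp [ha, huw]
    · simp only [ha, false_and, false_or, coeff0_mulX]
      rw [if_neg (fun h : _ ∧ _ => huw h.2.symm)]; simp
  · by_cases hb' : b = u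
    · subst hb'
      simp only [Finsupp.mem_support_iff, Finsupp.add_apply, Finsupp.single_apply]
      rw [if_pos (by simp), hsub₂, coeff1_mulX]
      by_cases ha : a = w
      · simp [ha, hb]
      · simp [ha, hb]
    · rw [if_neg (by
        simp only [Finsupp.mem_support_iff, Finsupp.add_apply, Finsupp.single_apply]
        simp [Ne.symm hb, Ne.symm hb'])]
      simp [hb, hb']

/-- Index i (as a natural number) viewed in Fin (3m+2); variable a_{i+1} is X (v13 m i). -/
def v13 (m : ℕ) (i : ℕ) : Fin (3*m+2) := ⟨i % (3*m+2), Nat.mod_lt _ (by omega)⟩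

/-- The ideal I generated by a_{3m+1} − aᵢ·a_{m+i} (1 ≤ i ≤ m),
a_{3m+2} − aᵢ·a_{2m+i} (1 ≤ i ≤ m), and all products aᵢaⱼ (1 ≤ i ≤ j ≤ 3m+2) not
occurring in the above generators. (Here aᵢ is the variable X (v13 m (i−1)).) -/
noncomputable def I13 (m : ℕ) : Ideal (MvPolynomial (Fin (3*m+2)) ℂ) :=
  Ideal.span
    ({p | ∃ i : ℕ, i < m ∧
        p = X (v13 m (3*m)) - X (v13 m i) * X (v13 m (m+i))}
      ∪ {p | ∃ i : ℕ, i < m ∧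
        p = X (v13 m (3*m+1)) - X (v13 m i) * X (v13 m (2*m+i))}
      ∪ {p | ∃ i j : ℕ, i ≤ j ∧ j < 3*m+2 ∧
        ¬(i < m ∧ (j = m + i ∨ j = 2*m + i)) ∧ p = X (v13 m i) * X (v13 m j)})

lemma v13_val (m i : ℕ) (h : i < 3*m+2) : ((v13 m i : ℕ)) = i := Nat.mod_eq_of_lt h

lemma v13_eq_iff (m : ℕ) {i j : ℕ} (hi : i < 3*m+2) (hj : j < 3*m+2) :
    v13 m i = v13 m j ↔ i = j := by
  rw [Fin.ext_iff, v13_val m i hi, v13_val m j hj]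

lemma v13_ne (m : ℕ) {i j : ℕ} (hi : i < 3*m+2) (hj : j < 3*m+2) (h : i ≠ j) :
    v13 m i ≠ v13 m j := fun hh => h ((v13_eq_iff m hi hj).1 hh)

lemma span_vanish {R : Type*} [CommRing R] {S : Set R} {F : R → ℂ} (h0 : F 0 = 0)
    (hadd : ∀ a b, F (a+b) = F a + F b) (hgen : ∀ x ∈ S, ∀ q, F (q*x) = 0) :
    ∀ p ∈ Ideal.span S, F p = 0 := by
  have key : ∀ p ∈ Ideal.span S, ∀ q, F (q * p) = 0 := by
    intro p hp
    induction hp using Submodule.span_induction with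
    | mem x hx => exact hgen x hx
    | zero => intro q; rw [mul_zero]; exact h0
    | add x y _ _ ihx ihy => intro q; rw [mul_add, hadd _ _, ihx q, ihy q, add_zero]
    | smul r x _ ih => intro q; rw [smul_eq_mul, ← mul_assoc]; exact ih (q*r)
  intro p hp
  have := key p hp 1
  rwa [one_mul] at this

lemma I13_coeff0 (m : ℕ) : ∀ p ∈ I13 m, coeff 0 p = 0 := by
  apply span_vanish (by simp) (fun a b => coeff_add _ _ _)
  rintro x ((⟨i,hi,rfl⟩|⟨i,hi,rfl⟩)|⟨i,j,hij,hj,hns,rfl⟩) q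
  · rw [mul_sub, coeff_sub, ← mul_assoc, coeff0_mulX, coeff0_mm, sub_zero]
  · rw [mul_sub, coeff_sub, ← mul_assoc, coeff0_mulX, coeff0_mm, sub_zero]
  · rw [← mul_assoc, coeff0_mm]

lemma I13_coeff1 (m : ℕ) (j : Fin (3*m+2)) (hj : (j:ℕ) < 3*m) :
    ∀ p ∈ I13 m, coeff (single j 1) p = 0 := by
  apply span_vanish (by simp) (fun a b => coeff_add _ _ _)
  rintro x ((⟨i,hi,rfl⟩|⟨i,hi,rfl⟩)|⟨i,k,hik,hk,hns,rfl⟩) q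
  · rw [mul_sub, coeff_sub, ← mul_assoc, coeff1_mulX, coeff1_mm,
      if_neg (by intro h; rw [← h] at hj; rw [v13_val m _ (by omega)] at hj; omega), sub_zero]
  · rw [mul_sub, coeff_sub, ← mul_assoc, coeff1_mulX, coeff1_mm,
      if_neg (by intro h; rw [← h] at hj; rw [v13_val m _ (by omega)] at hj; omega), sub_zero]
  · rw [← mul_assoc, coeff1_mm]

lemma I13_u (m : ℕ) (hm : 1 ≤ m) : ∀ p ∈ I13 m,
    coeff (single (v13 m (3*m)) 1) p
      + ∑ i ∈ Finset.range m, coeff (single (v13 m i) 1 + single (v13 m (m+i)) 1) p = 0 := by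
  apply span_vanish (by simp)
    (fun a b => by simp only [coeff_add, Finset.sum_add_distrib]; ring)
  rintro x ((⟨i,hi,rfl⟩|⟨i,hi,rfl⟩)|⟨i,k,hik,hk,hns,rfl⟩) q
  · have e1 : coeff (single (v13 m (3*m)) 1)
        (q * (X (v13 m (3*m)) - X (v13 m i) * X (v13 m (m+i)))) = coeff 0 q := by
      rw [mul_sub, coeff_sub, ← mul_assoc, coeff1_mulX, coeff1_mm, if_pos rfl, sub_zero]
    have e2 : ∀ i' ∈ Finset.range m, coeff (single (v13 m i') 1 + single (v13 m (m+i')) 1)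
        (q * (X (v13 m (3*m)) - X (v13 m i) * X (v13 m (m+i))))
        = if i' = i then -coeff 0 q else 0 := by
      intro i' hi'
      rw [Finset.mem_range] at hi'
      rw [mul_sub, coeff_sub, ← mul_assoc,
        coeff2_mulX _ _ _ _ (v13_ne m (by omega) (by omega) (by omega))
          (v13_ne m (by omega) (by omega) (by omega)),
        coeff2_mm _ _ _ _ _ (v13_ne m (by omega) (by omega) (by omega))]
      by_cases h : i' = i
      · subst h
        rw [if_pos (Or.inl ⟨rfl, rfl⟩), if_pos rfl, zero_sub]
      · rw [if_neg, if_neg h, sub_zero]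
        rintro (⟨h1,h2⟩|⟨h1,h2⟩)
        · exact h ((v13_eq_iff m (by omega) (by omega)).1 h1).symm
        · have := (v13_eq_iff m (by omega) (by omega)).1 h1; omega
    rw [e1, Finset.sum_congr rfl e2, Finset.sum_ite_eq' (Finset.range m) i (fun _ => -coeff 0 q),
      if_pos (Finset.mem_range.2 hi)]
    ring
  · have e1 : coeff (single (v13 m (3*m)) 1)
        (q * (X (v13 m (3*m+1)) - X (v13 m i) * X (v13 m (2*m+i)))) = 0 := by
      rw [mul_sub, coeff_sub, ← mul_assoc, coeff1_mulX, coeff1_mm,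
        if_neg (v13_ne m (by omega) (by omega) (by omega)), sub_zero]
    have e2 : ∀ i' ∈ Finset.range m, coeff (single (v13 m i') 1 + single (v13 m (m+i')) 1)
        (q * (X (v13 m (3*m+1)) - X (v13 m i) * X (v13 m (2*m+i)))) = 0 := by
      intro i' hi'
      rw [Finset.mem_range] at hi'
      rw [mul_sub, coeff_sub, ← mul_assoc,
        coeff2_mulX _ _ _ _ (v13_ne m (by omega) (by omega) (by omega))
          (v13_ne m (by omega) (by omega) (by omega)),
        coeff2_mm _ _ _ _ _ (v13_ne m (by omega) (by omega) (by omega))]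
      rw [if_neg, sub_zero]
      rintro (⟨h1,h2⟩|⟨h1,h2⟩)
      · have := (v13_eq_iff m (by omega) (by omega)).1 h2; omega
      · have := (v13_eq_iff m (by omega) (by omega)).1 h1; omega
    rw [e1, Finset.sum_congr rfl e2, Finset.sum_const, smul_zero, add_zero]
  · have e1 : coeff (single (v13 m (3*m)) 1) (q * (X (v13 m i) * X (v13 m k))) = 0 := by
      rw [← mul_assoc, coeff1_mm]
    have e2 : ∀ i' ∈ Finset.range m, coeff (single (v13 m i') 1 + single (v13 m (m+i')) 1)
        (q * (X (v13 m i) * X (v13 m k))) = 0 := by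
      intro i' hi'
      rw [Finset.mem_range] at hi'
      rw [← mul_assoc, coeff2_mm _ _ _ _ _ (v13_ne m (by omega) (by omega) (by omega))]
      rw [if_neg]
      rintro (⟨h1,h2⟩|⟨h1,h2⟩)
      · have e1' := (v13_eq_iff m (by omega) (by omega)).1 h1
        have e2' := (v13_eq_iff m (by omega) (by omega)).1 h2
        exact hns ⟨by omega, Or.inl (by omega)⟩
      · have e1' := (v13_eq_iff m (by omega) (by omega)).1 h1
        have e2' := (v13_eq_iff m (by omega) (by omega)).1 h2
        omega
    rw [e1, Finset.sum_congr rfl e2, Finset.sum_const, smul_zero, add_zero]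

lemma I13_v (m : ℕ) (hm : 1 ≤ m) : ∀ p ∈ I13 m,
    coeff (single (v13 m (3*m+1)) 1) p
      + ∑ i ∈ Finset.range m, coeff (single (v13 m i) 1 + single (v13 m (2*m+i)) 1) p = 0 := by
  apply span_vanish (by simp)
    (fun a b => by simp only [coeff_add, Finset.sum_add_distrib]; ring)
  rintro x ((⟨i,hi,rfl⟩|⟨i,hi,rfl⟩)|⟨i,k,hik,hk,hns,rfl⟩) q
  · have e1 : coeff (single (v13 m (3*m+1)) 1)
        (q * (X (v13 m (3*m)) - X (v13 m i) * X (v13 m (m+i)))) = 0 := by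
      rw [mul_sub, coeff_sub, ← mul_assoc, coeff1_mulX, coeff1_mm,
        if_neg (v13_ne m (by omega) (by omega) (by omega)), sub_zero]
    have e2 : ∀ i' ∈ Finset.range m, coeff (single (v13 m i') 1 + single (v13 m (2*m+i')) 1)
        (q * (X (v13 m (3*m)) - X (v13 m i) * X (v13 m (m+i)))) = 0 := by
      intro i' hi'
      rw [Finset.mem_range] at hi'
      rw [mul_sub, coeff_sub, ← mul_assoc,
        coeff2_mulX _ _ _ _ (v13_ne m (by omega) (by omega) (by omega))
          (v13_ne m (by omega) (by omega) (by omega)),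
        coeff2_mm _ _ _ _ _ (v13_ne m (by omega) (by omega) (by omega))]
      rw [if_neg, sub_zero]
      rintro (⟨h1,h2⟩|⟨h1,h2⟩)
      · have := (v13_eq_iff m (by omega) (by omega)).1 h2; omega
      · have := (v13_eq_iff m (by omega) (by omega)).1 h1; omega
    rw [e1, Finset.sum_congr rfl e2, Finset.sum_const, smul_zero, add_zero]
  · have e1 : coeff (single (v13 m (3*m+1)) 1)
        (q * (X (v13 m (3*m+1)) - X (v13 m i) * X (v13 m (2*m+i)))) = coeff 0 q := by
      rw [mul_sub, coeff_sub, ← mul_assoc, coeff1_mulX, coeff1_mm, if_pos rfl, sub_zero]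
    have e2 : ∀ i' ∈ Finset.range m, coeff (single (v13 m i') 1 + single (v13 m (2*m+i')) 1)
        (q * (X (v13 m (3*m+1)) - X (v13 m i) * X (v13 m (2*m+i))))
        = if i' = i then -coeff 0 q else 0 := by
      intro i' hi'
      rw [Finset.mem_range] at hi'
      rw [mul_sub, coeff_sub, ← mul_assoc,
        coeff2_mulX _ _ _ _ (v13_ne m (by omega) (by omega) (by omega))
          (v13_ne m (by omega) (by omega) (by omega)),
        coeff2_mm _ _ _ _ _ (v13_ne m (by omega) (by omega) (by omega))]
      by_cases h : i' = i
      · subst h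
        rw [if_pos (Or.inl ⟨rfl, rfl⟩), if_pos rfl, zero_sub]
      · rw [if_neg, if_neg h, sub_zero]
        rintro (⟨h1,h2⟩|⟨h1,h2⟩)
        · exact h ((v13_eq_iff m (by omega) (by omega)).1 h1).symm
        · have := (v13_eq_iff m (by omega) (by omega)).1 h1; omega
    rw [e1, Finset.sum_congr rfl e2, Finset.sum_ite_eq' (Finset.range m) i (fun _ => -coeff 0 q),
      if_pos (Finset.mem_range.2 hi)]
    ring
  · have e1 : coeff (single (v13 m (3*m+1)) 1) (q * (X (v13 m i) * X (v13 m k))) = 0 := by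
      rw [← mul_assoc, coeff1_mm]
    have e2 : ∀ i' ∈ Finset.range m, coeff (single (v13 m i') 1 + single (v13 m (2*m+i')) 1)
        (q * (X (v13 m i) * X (v13 m k))) = 0 := by
      intro i' hi'
      rw [Finset.mem_range] at hi'
      rw [← mul_assoc, coeff2_mm _ _ _ _ _ (v13_ne m (by omega) (by omega) (by omega))]
      rw [if_neg]
      rintro (⟨h1,h2⟩|⟨h1,h2⟩)
      · have e1' := (v13_eq_iff m (by omega) (by omega)).1 h1
        have e2' := (v13_eq_iff m (by omega) (by omega)).1 h2
        exact hns ⟨by omega, Or.inr (by omega)⟩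
      · have e1' := (v13_eq_iff m (by omega) (by omega)).1 h1
        have e2' := (v13_eq_iff m (by omega) (by omega)).1 h2
        omega
    rw [e1, Finset.sum_congr rfl e2, Finset.sum_const, smul_zero, add_zero]

/-- The algebra A = ℂ[a₁,…,a_{3m+2}]/I. -/
noncomputable abbrev A13 (m : ℕ) := MvPolynomial (Fin (3*m+2)) ℂ ⧸ I13 m

/-- The ideal m = (a₁,…,a_{3m+2}) of A. -/
noncomputable def mm13 (m : ℕ) : Ideal (A13 m) :=
  Ideal.span (Set.range fun i : Fin (3*m+2) => Ideal.Quotient.mk (I13 m) (X i))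

noncomputable def b13 (m : ℕ) : Fin (3*m+3) → A13 m := fun k =>
  if h : (k:ℕ) < 3*m+2 then Ideal.Quotient.mk (I13 m) (X (⟨k, h⟩ : Fin (3*m+2))) else 1

lemma b13_castSucc (m : ℕ) (k : Fin (3*m+2)) :
    b13 m k.castSucc = Ideal.Quotient.mk (I13 m) (X k) := by
  rw [b13, dif_pos (by simpa using k.isLt)]
  exact congrArg _ (congrArg X (Fin.ext (by simp)))

lemma b13_last (m : ℕ) : b13 m (Fin.last (3*m+2)) = 1 := by
  rw [b13, dif_neg (by simp)]

lemma smul_mk13 (m : ℕ) (c : ℂ) (p : MvPolynomial (Fin (3*m+2)) ℂ) :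
    c • Ideal.Quotient.mk (I13 m) p = Ideal.Quotient.mk (I13 m) (C c * p) := by
  rw [← MvPolynomial.smul_eq_C_mul, ← Ideal.Quotient.mkₐ_eq_mk ℂ (I13 m), map_smul]

lemma single13_ne_zero (m : ℕ) (j : Fin (3*m+2)) : (single j 1 : Fin (3*m+2) →₀ ℕ) ≠ 0 :=
  fun h => one_ne_zero (Finsupp.single_eq_zero.1 h)

lemma single_ne_add (m : ℕ) {u w k : Fin (3*m+2)} (huw : u ≠ w) :
    (single k 1 : Fin (3*m+2) →₀ ℕ) ≠ single u 1 + single w 1 := by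
  intro h
  have hu := DFunLike.congr_fun h u
  have hw := DFunLike.congr_fun h w
  simp only [Finsupp.add_apply, Finsupp.single_apply, if_pos rfl, if_neg huw,
    if_neg (Ne.symm huw)] at hu hw
  by_cases hku : k = u <;> by_cases hkw : k = w <;> simp_all

lemma add_single_ne_zero (m : ℕ) {u w : Fin (3*m+2)} (huw : u ≠ w) :
    (single u 1 + single w 1 : Fin (3*m+2) →₀ ℕ) ≠ 0 := by
  intro h
  have hu := DFunLike.congr_fun h u
  simp [Finsupp.single_apply, if_neg (Ne.symm huw)] at hu

lemma b13_indep (m : ℕ) (hm : 1 ≤ m) : LinearIndependent ℂ (b13 m) := by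
  rw [Fintype.linearIndependent_iff]
  intro g hg
  set P : MvPolynomial (Fin (3*m+2)) ℂ :=
    C (g (Fin.last (3*m+2))) + ∑ k : Fin (3*m+2), C (g k.castSucc) * X k with hP
  have hmk : Ideal.Quotient.mk (I13 m) P = ∑ k : Fin (3*m+3), g k • b13 m k := by
    rw [Fin.sum_univ_castSucc]
    simp only [b13_castSucc, smul_mk13, b13_last]
    have hlast2 : g (Fin.last (3*m+2)) • (1 : A13 m)
        = Ideal.Quotient.mk (I13 m) (C (g (Fin.last (3*m+2)))) := by
      rw [← map_one (Ideal.Quotient.mk (I13 m)), smul_mk13, mul_one]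
    rw [hP, map_add, map_sum, hlast2]
    exact add_comm _ _
  have hPmem : P ∈ I13 m := by
    rw [← Ideal.Quotient.eq_zero_iff_mem, hmk, hg]
  have c0 : coeff 0 P = g (Fin.last (3*m+2)) := by
    rw [hP, coeff_add, coeff_C, if_pos rfl, coeff_sum]
    have : ∀ k : Fin (3*m+2), coeff 0 (C (g k.castSucc) * X k) = 0 := by
      intro k
      rw [coeff_C_mul, coeff_X', if_neg (single13_ne_zero m k), mul_zero]
    rw [Finset.sum_congr rfl fun k _ => this k, Finset.sum_const, smul_zero, add_zero]
  have c1 : ∀ j : Fin (3*m+2), coeff (single j 1) P = g j.castSucc := by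
    intro j
    rw [hP, coeff_add, coeff_C, if_neg (fun h => single13_ne_zero m j h.symm), zero_add,
      coeff_sum]
    have : ∀ k : Fin (3*m+2), coeff (single j 1) (C (g k.castSucc) * X k)
        = if k = j then g k.castSucc else 0 := by
      intro k
      rw [coeff_C_mul, coeff_X']
      by_cases h : k = j
      · subst h; simp
      · rw [if_neg (by
          rw [Finsupp.single_left_inj (one_ne_zero)]; exact h), if_neg h, mul_zero]
    rw [Finset.sum_congr rfl fun k _ => this k, Finset.sum_ite_eq' Finset.univ j,
      if_pos (Finset.mem_univ j)]
  have c2 : ∀ u w : Fin (3*m+2), u ≠ w → coeff (single u 1 + single w 1) P = 0 := by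
    intro u w huw
    rw [hP, coeff_add, coeff_C, if_neg (fun h => add_single_ne_zero m huw h.symm), zero_add,
      coeff_sum]
    have : ∀ k : Fin (3*m+2), coeff (single u 1 + single w 1) (C (g k.castSucc) * X k) = 0 := by
      intro k
      rw [coeff_C_mul, coeff_X', if_neg (single_ne_add m huw), mul_zero]
    rw [Finset.sum_congr rfl fun k _ => this k, Finset.sum_const, smul_zero]
  have hsum1 : ∀ i ∈ Finset.range m,
      coeff (single (v13 m i) 1 + single (v13 m (m+i)) 1) P = 0 := by
    intro i hi
    rw [Finset.mem_range] at hi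
    exact c2 _ _ (v13_ne m (by omega) (by omega) (by omega))
  have hsum2 : ∀ i ∈ Finset.range m,
      coeff (single (v13 m i) 1 + single (v13 m (2*m+i)) 1) P = 0 := by
    intro i hi
    rw [Finset.mem_range] at hi
    exact c2 _ _ (v13_ne m (by omega) (by omega) (by omega))
  intro k
  have hk4 := k.isLt
  by_cases h1 : (k:ℕ) < 3*m
  · have := I13_coeff1 m (v13 m k) (by rwa [v13_val m k (by omega)]) P hPmem
    rw [c1] at this
    rw [show k = (v13 m k).castSucc from Fin.ext (by simp [v13_val m (k:ℕ) (by omega)])]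
    exact this
  by_cases h2 : (k:ℕ) = 3*m
  · have := I13_u m hm P hPmem
    rw [c1, Finset.sum_congr rfl hsum1, Finset.sum_const, smul_zero, add_zero] at this
    rw [show k = (v13 m (3*m)).castSucc from Fin.ext (by simp [v13_val m (3*m) (by omega), h2])]
    exact this
  by_cases h3 : (k:ℕ) = 3*m+1
  · have := I13_v m hm P hPmem
    rw [c1, Finset.sum_congr rfl hsum2, Finset.sum_const, smul_zero, add_zero] at this
    rw [show k = (v13 m (3*m+1)).castSucc from Fin.ext (by simp [v13_val m (3*m+1) (by omega), h3])]
    exact this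
  · have hlast : k = Fin.last (3*m+2) := Fin.ext (by simp; omega)
    rw [hlast, ← c0]
    exact I13_coeff0 m P hPmem

lemma v13_self (m : ℕ) (i : Fin (3*m+2)) : v13 m (i : ℕ) = i :=
  Fin.ext (v13_val m _ i.isLt)

lemma mul_x_x_aux (m : ℕ) (hm : 1 ≤ m) (i j : Fin (3*m+2)) (hij : (i:ℕ) ≤ (j:ℕ)) :
    Ideal.Quotient.mk (I13 m) (X i) * Ideal.Quotient.mk (I13 m) (X j) ∈
      Submodule.span ℂ ({Ideal.Quotient.mk (I13 m) (X (v13 m (3*m))),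
        Ideal.Quotient.mk (I13 m) (X (v13 m (3*m+1)))} : Set (A13 m)) := by
  rw [← map_mul]
  by_cases hsp : (i:ℕ) < m ∧ ((j:ℕ) = m + (i:ℕ) ∨ (j:ℕ) = 2*m + (i:ℕ))
  · rcases hsp.2 with hj | hj
    · have hgen : X (v13 m (3*m)) - X i * X j ∈ I13 m := by
        apply Ideal.subset_span
        refine Or.inl (Or.inl ⟨(i:ℕ), hsp.1, ?_⟩)
        rw [v13_self, ← hj, v13_self]
      have : Ideal.Quotient.mk (I13 m) (X i * X j)
          = Ideal.Quotient.mk (I13 m) (X (v13 m (3*m))) := by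
        rw [Ideal.Quotient.mk_eq_mk_iff_sub_mem]
        simpa using (neg_mem hgen)
      rw [this]
      exact Submodule.subset_span (by simp)
    · have hgen : X (v13 m (3*m+1)) - X i * X j ∈ I13 m := by
        apply Ideal.subset_span
        refine Or.inl (Or.inr ⟨(i:ℕ), hsp.1, ?_⟩)
        rw [v13_self, ← hj, v13_self]
      have : Ideal.Quotient.mk (I13 m) (X i * X j)
          = Ideal.Quotient.mk (I13 m) (X (v13 m (3*m+1))) := by
        rw [Ideal.Quotient.mk_eq_mk_iff_sub_mem]
        simpa using (neg_mem hgen)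
      rw [this]
      exact Submodule.subset_span (by simp)
  · have hgen : X i * X j ∈ I13 m := by
      apply Ideal.subset_span
      refine Or.inr ⟨(i:ℕ), (j:ℕ), hij, j.isLt, hsp, ?_⟩
      rw [v13_self, v13_self]
    rw [Ideal.Quotient.eq_zero_iff_mem.2 hgen]
    exact zero_mem _

lemma mul_x_x (m : ℕ) (hm : 1 ≤ m) (i j : Fin (3*m+2)) :
    Ideal.Quotient.mk (I13 m) (X i) * Ideal.Quotient.mk (I13 m) (X j) ∈
      Submodule.span ℂ ({Ideal.Quotient.mk (I13 m) (X (v13 m (3*m))),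
        Ideal.Quotient.mk (I13 m) (X (v13 m (3*m+1)))} : Set (A13 m)) := by
  rcases le_total (i:ℕ) (j:ℕ) with h | h
  · exact mul_x_x_aux m hm i j h
  · have := mul_x_x_aux m hm j i h
    rwa [show Ideal.Quotient.mk (I13 m) (X j) * Ideal.Quotient.mk (I13 m) (X i)
      = Ideal.Quotient.mk (I13 m) (X i) * Ideal.Quotient.mk (I13 m) (X j) from mul_comm _ _] at this

lemma pair_sub_range (m : ℕ) :
    ({Ideal.Quotient.mk (I13 m) (X (v13 m (3*m))),
      Ideal.Quotient.mk (I13 m) (X (v13 m (3*m+1)))} : Set (A13 m)) ⊆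
      Set.range (b13 m) := by
  rintro x (rfl | rfl)
  · exact ⟨(v13 m (3*m)).castSucc, b13_castSucc m _⟩
  · exact ⟨(v13 m (3*m+1)).castSucc, b13_castSucc m _⟩

lemma b13_mul_x (m : ℕ) (hm : 1 ≤ m) (k : Fin (3*m+3)) (i : Fin (3*m+2)) :
    b13 m k * Ideal.Quotient.mk (I13 m) (X i) ∈ Submodule.span ℂ (Set.range (b13 m)) := by
  induction k using Fin.lastCases with
  | last =>
    rw [b13_last, one_mul]
    exact Submodule.subset_span ⟨i.castSucc, b13_castSucc m i⟩
  | cast k =>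
    rw [b13_castSucc]
    exact Submodule.span_le.2 (Set.Subset.trans (pair_sub_range m) Submodule.subset_span)
      (mul_x_x m hm k i)

lemma span_mul_x (m : ℕ) (hm : 1 ≤ m) (a : A13 m) (i : Fin (3*m+2))
    (ha : a ∈ Submodule.span ℂ (Set.range (b13 m))) :
    a * Ideal.Quotient.mk (I13 m) (X i) ∈ Submodule.span ℂ (Set.range (b13 m)) := by
  induction ha using Submodule.span_induction with
  | mem x hx => obtain ⟨k, rfl⟩ := hx; exact b13_mul_x m hm k i
  | zero => rw [zero_mul]; exact zero_mem _
  | add x y _ _ ihx ihy => rw [add_mul]; exact add_mem ihx ihy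
  | smul c x _ ih => rw [smul_mul_assoc]; exact Submodule.smul_mem _ c ih

lemma b13_span (m : ℕ) (hm : 1 ≤ m) (a : A13 m) :
    a ∈ Submodule.span ℂ (Set.range (b13 m)) := by
  obtain ⟨p, rfl⟩ := Ideal.Quotient.mk_surjective a
  induction p using MvPolynomial.induction_on with
  | C c =>
    have : Ideal.Quotient.mk (I13 m) (C c) = c • b13 m (Fin.last (3*m+2)) := by
      rw [b13_last, ← map_one (Ideal.Quotient.mk (I13 m)), smul_mk13, mul_one]
    rw [this]
    exact Submodule.smul_mem _ _ (Submodule.subset_span ⟨_, rfl⟩)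
  | add p q hp hq => rw [map_add]; exact add_mem hp hq
  | mul_X p i hp => rw [map_mul]; exact span_mul_x m hm _ i hp

noncomputable def basis13 (m : ℕ) (hm : 1 ≤ m) : Module.Basis (Fin (3*m+3)) ℂ (A13 m) :=
  Module.Basis.mk (b13_indep m hm) (fun x _ => b13_span m hm x)

lemma finrank_A13 (m : ℕ) (hm : 1 ≤ m) : Module.finrank ℂ (A13 m) = 3*m+3 := by
  have := Module.Finite.of_basis (basis13 m hm)
  rw [Module.finrank_eq_card_basis (basis13 m hm), Fintype.card_fin]

noncomputable def xs13 (m : ℕ) : Fin (3*m+2) → A13 m := fun i => Ideal.Quotient.mk (I13 m) (X i)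

lemma mm13_eq (m : ℕ) : mm13 m = Ideal.span (Set.range (xs13 m)) := rfl

lemma xs13_eq_b13 (m : ℕ) (i : Fin (3*m+2)) : xs13 m i = b13 m i.castSucc :=
  (b13_castSucc m i).symm

lemma xtop_mul (m : ℕ) (hm : 1 ≤ m) (k : Fin (3*m+2)) :
    xs13 m k * xs13 m (v13 m (3*m)) = 0 := by
  unfold xs13
  rw [← map_mul, Ideal.Quotient.eq_zero_iff_mem]
  apply Ideal.subset_span
  by_cases h : (k:ℕ) ≤ 3*m
  · refine Or.inr ⟨(k:ℕ), 3*m, h, by omega, by omega, ?_⟩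
    rw [v13_self]
  · refine Or.inr ⟨3*m, (k:ℕ), by omega, k.isLt, by omega, ?_⟩
    rw [v13_self]; exact mul_comm _ _

lemma xtop1_mul (m : ℕ) (hm : 1 ≤ m) (k : Fin (3*m+2)) :
    xs13 m k * xs13 m (v13 m (3*m+1)) = 0 := by
  unfold xs13
  rw [← map_mul, Ideal.Quotient.eq_zero_iff_mem]
  apply Ideal.subset_span
  have hk := k.isLt
  refine Or.inr ⟨(k:ℕ), 3*m+1, by omega, by omega, by omega, ?_⟩
  rw [v13_self]

lemma mulA_span_pair (m : ℕ) (hm : 1 ≤ m) (r a : A13 m)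
    (ha : a ∈ Submodule.span ℂ ({xs13 m (v13 m (3*m)), xs13 m (v13 m (3*m+1))} : Set (A13 m))) :
    r * a ∈ Submodule.span ℂ ({xs13 m (v13 m (3*m)), xs13 m (v13 m (3*m+1))} : Set (A13 m)) := by
  induction ha using Submodule.span_induction with
  | zero => rw [mul_zero]; exact zero_mem _
  | add x y _ _ ihx ihy => rw [mul_add]; exact add_mem ihx ihy
  | smul c x _ ih => rw [mul_smul_comm]; exact Submodule.smul_mem _ c ih
  | mem x hx =>
    -- x is one of the two top elements; multiply r expanded in basis
    have hr := b13_span m hm r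
    induction hr using Submodule.span_induction with
    | zero => rw [zero_mul]; exact zero_mem _
    | add y z _ _ ihy ihz => rw [add_mul]; exact add_mem ihy ihz
    | smul c y _ ih => rw [smul_mul_assoc]; exact Submodule.smul_mem _ c ih
    | mem y hy =>
      obtain ⟨k, rfl⟩ := hy
      induction k using Fin.lastCases with
      | last => rw [b13_last, one_mul]; exact Submodule.subset_span hx
      | cast k =>
        rw [← xs13_eq_b13]
        rcases hx with rfl | rfl
        · rw [xtop_mul m hm k]; exact zero_mem _
        · rw [xtop1_mul m hm k]; exact zero_mem _

lemma mulA_span_xs (m : ℕ) (hm : 1 ≤ m) (r a : A13 m)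
    (ha : a ∈ Submodule.span ℂ (Set.range (xs13 m))) :
    r * a ∈ Submodule.span ℂ (Set.range (xs13 m)) := by
  have pair_le : Submodule.span ℂ
      ({xs13 m (v13 m (3*m)), xs13 m (v13 m (3*m+1))} : Set (A13 m)) ≤
      Submodule.span ℂ (Set.range (xs13 m)) :=
    Submodule.span_mono (by rintro x (rfl | rfl) <;> exact ⟨_, rfl⟩)
  induction ha using Submodule.span_induction with
  | zero => rw [mul_zero]; exact zero_mem _
  | add x y _ _ ihx ihy => rw [mul_add]; exact add_mem ihx ihy
  | smul c x _ ih => rw [mul_smul_comm]; exact Submodule.smul_mem _ c ih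
  | mem x hx =>
    obtain ⟨i, rfl⟩ := hx
    have hr := b13_span m hm r
    induction hr using Submodule.span_induction with
    | zero => rw [zero_mul]; exact zero_mem _
    | add y z _ _ ihy ihz => rw [add_mul]; exact add_mem ihy ihz
    | smul c y _ ih => rw [smul_mul_assoc]; exact Submodule.smul_mem _ c ih
    | mem y hy =>
      obtain ⟨k, rfl⟩ := hy
      induction k using Fin.lastCases with
      | last => rw [b13_last, one_mul]; exact Submodule.subset_span ⟨i, rfl⟩
      | cast k => rw [← xs13_eq_b13]; exact pair_le (mul_x_x m hm k i)

lemma mm13_restrict (m : ℕ) (hm : 1 ≤ m) :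
    (mm13 m).restrictScalars ℂ = Submodule.span ℂ (Set.range (xs13 m)) := by
  apply le_antisymm
  · intro a ha
    have ha' : a ∈ Ideal.span (Set.range (xs13 m)) := ha
    clear ha
    induction ha' using Submodule.span_induction with
    | mem x hx => exact Submodule.subset_span hx
    | zero => exact zero_mem _
    | add x y _ _ ihx ihy => exact add_mem ihx ihy
    | smul r x _ ih => rw [smul_eq_mul]; exact mulA_span_xs m hm r x ih
  · rw [Submodule.span_le]
    rintro x ⟨i, rfl⟩
    exact Ideal.subset_span ⟨i, rfl⟩

lemma mm13_sq (m : ℕ) (hm : 1 ≤ m) :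
    mm13 m ^ 2 = Ideal.span ({xs13 m (v13 m (3*m)), xs13 m (v13 m (3*m+1))} : Set (A13 m)) := by
  apply le_antisymm
  · rw [pow_two, mm13_eq, Ideal.span_mul_span']
    rw [Ideal.span_le]
    rintro x ⟨y, ⟨i, rfl⟩, z, ⟨j, rfl⟩, rfl⟩
    have hle : Submodule.span ℂ ({xs13 m (v13 m (3*m)), xs13 m (v13 m (3*m+1))} : Set (A13 m)) ≤
        (Ideal.span ({xs13 m (v13 m (3*m)), xs13 m (v13 m (3*m+1))} : Set (A13 m))).restrictScalars ℂ :=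
      Submodule.span_le.2 (fun y hy => Ideal.subset_span hy)
    exact hle (mul_x_x m hm i j)
  · rw [Ideal.span_le]
    have h1 : xs13 m (v13 m (3*m)) ∈ mm13 m ^ 2 := by
      have hgen : X (v13 m (3*m)) - X (v13 m 0) * X (v13 m (m+0)) ∈ I13 m :=
        Ideal.subset_span (Or.inl (Or.inl ⟨0, hm, rfl⟩))
      have heq : xs13 m (v13 m (3*m)) = xs13 m (v13 m 0) * xs13 m (v13 m (m+0)) := by
        rw [xs13, xs13, xs13, ← map_mul, Ideal.Quotient.mk_eq_mk_iff_sub_mem]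
        exact hgen
      rw [heq, pow_two]
      exact Ideal.mul_mem_mul (Ideal.subset_span ⟨_, rfl⟩) (Ideal.subset_span ⟨_, rfl⟩)
    have h2 : xs13 m (v13 m (3*m+1)) ∈ mm13 m ^ 2 := by
      have hgen : X (v13 m (3*m+1)) - X (v13 m 0) * X (v13 m (2*m+0)) ∈ I13 m :=
        Ideal.subset_span (Or.inl (Or.inr ⟨0, hm, rfl⟩))
      have heq : xs13 m (v13 m (3*m+1)) = xs13 m (v13 m 0) * xs13 m (v13 m (2*m+0)) := by
        rw [xs13, xs13, xs13, ← map_mul, Ideal.Quotient.mk_eq_mk_iff_sub_mem]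
        exact hgen
      rw [heq, pow_two]
      exact Ideal.mul_mem_mul (Ideal.subset_span ⟨_, rfl⟩) (Ideal.subset_span ⟨_, rfl⟩)
    rintro x (rfl | rfl)
    · exact h1
    · exact h2

lemma mm13_sq_restrict (m : ℕ) (hm : 1 ≤ m) :
    (mm13 m ^ 2).restrictScalars ℂ =
      Submodule.span ℂ ({xs13 m (v13 m (3*m)), xs13 m (v13 m (3*m+1))} : Set (A13 m)) := by
  apply le_antisymm
  · intro a ha
    have ha' : a ∈ Ideal.span ({xs13 m (v13 m (3*m)), xs13 m (v13 m (3*m+1))} : Set (A13 m)) := by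
      rw [← mm13_sq m hm]; exact ha
    clear ha
    induction ha' using Submodule.span_induction with
    | mem x hx => exact Submodule.subset_span hx
    | zero => exact zero_mem _
    | add x y _ _ ihx ihy => exact add_mem ihx ihy
    | smul r x _ ih => rw [smul_eq_mul]; exact mulA_span_pair m hm r x ih
  · rw [Submodule.span_le]
    rw [mm13_sq m hm]
    rintro x (rfl | rfl) <;> exact Ideal.subset_span (by simp)

lemma mm13_cube (m : ℕ) (hm : 1 ≤ m) : mm13 m ^ 3 = ⊥ := by
  have : mm13 m ^ 3 = mm13 m ^ 2 * mm13 m := by ring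
  rw [this, mm13_sq m hm, mm13_eq, Ideal.span_mul_span']
  rw [eq_bot_iff, Ideal.span_le]
  rintro x ⟨y, (rfl | rfl), z, ⟨i, rfl⟩, rfl⟩
  · have h0 : xs13 m (v13 m (3*m)) * xs13 m i = 0 := (mul_comm _ _).trans (xtop_mul m hm i)
    simp [h0]
  · have h0 : xs13 m (v13 m (3*m+1)) * xs13 m i = 0 := (mul_comm _ _).trans (xtop1_mul m hm i)
    simp [h0]

lemma xs13_indep (m : ℕ) (hm : 1 ≤ m) : LinearIndependent ℂ (xs13 m) := by
  have : xs13 m = (b13 m) ∘ Fin.castSucc := funext fun i => xs13_eq_b13 m i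
  rw [this]
  exact (b13_indep m hm).comp Fin.castSucc (Fin.castSucc_injective _)

lemma finrank_span_xs13 (m : ℕ) (hm : 1 ≤ m) :
    Module.finrank ℂ ↥(Submodule.span ℂ (Set.range (xs13 m))) = 3*m+2 := by
  rw [finrank_span_eq_card (xs13_indep m hm), Fintype.card_fin]

noncomputable def p2 (m : ℕ) : Fin 2 → A13 m := fun t =>
  if t = 0 then xs13 m (v13 m (3*m)) else xs13 m (v13 m (3*m+1))

lemma p2_range (m : ℕ) : Set.range (p2 m) =
    ({xs13 m (v13 m (3*m)), xs13 m (v13 m (3*m+1))} : Set (A13 m)) := by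
  ext y
  simp [p2, Fin.exists_fin_two, eq_comm]

lemma p2_indep (m : ℕ) (hm : 1 ≤ m) : LinearIndependent ℂ (p2 m) := by
  have h2 : p2 m = (b13 m) ∘ (fun t : Fin 2 =>
      if t = 0 then (v13 m (3*m)).castSucc else (v13 m (3*m+1)).castSucc) := by
    funext t
    by_cases h : t = 0 <;> simp [p2, h, xs13_eq_b13]
  rw [h2]
  refine (b13_indep m hm).comp _ ?_
  intro a b hab
  have hne : (v13 m (3*m)).castSucc ≠ (v13 m (3*m+1)).castSucc := by
    intro h
    exact v13_ne m (by omega) (by omega) (by omega) (Fin.castSucc_injective _ h)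
  fin_cases a <;> fin_cases b <;> simp_all

lemma finrank_span_p2 (m : ℕ) (hm : 1 ≤ m) :
    Module.finrank ℂ
      ↥(Submodule.span ℂ ({xs13 m (v13 m (3*m)), xs13 m (v13 m (3*m+1))} : Set (A13 m))) = 2 := by
  rw [← p2_range m, finrank_span_eq_card (p2_indep m hm), Fintype.card_fin]

lemma finrank_mm13 (m : ℕ) (hm : 1 ≤ m) : Module.finrank ℂ ↥(mm13 m) = 3*m+2 := by
  have e : ↥((mm13 m).restrictScalars ℂ) ≃ₗ[ℂ] ↥(mm13 m) :=
    (Submodule.restrictScalarsEquiv ℂ (A13 m) (A13 m) (mm13 m)).restrictScalars ℂ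
  rw [← e.finrank_eq]
  rw [show (mm13 m).restrictScalars ℂ = Submodule.span ℂ (Set.range (xs13 m)) from
    mm13_restrict m hm]
  exact finrank_span_xs13 m hm

lemma finrank_mm13_sq (m : ℕ) (hm : 1 ≤ m) : Module.finrank ℂ ↥(mm13 m ^ 2) = 2 := by
  have e : ↥((mm13 m ^ 2).restrictScalars ℂ) ≃ₗ[ℂ] ↥(mm13 m ^ 2) :=
    (Submodule.restrictScalarsEquiv ℂ (A13 m) (A13 m) (mm13 m ^ 2)).restrictScalars ℂ
  rw [← e.finrank_eq, show (mm13 m ^ 2).restrictScalars ℂ = Submodule.span ℂ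
    ({xs13 m (v13 m (3*m)), xs13 m (v13 m (3*m+1))} : Set (A13 m)) from mm13_sq_restrict m hm]
  exact finrank_span_p2 m hm

noncomputable def eps13 (m : ℕ) : A13 m →+* ℂ :=
  Ideal.Quotient.lift (I13 m)
    ((MvPolynomial.aeval (fun _ : Fin (3*m+2) => (0:ℂ))).toRingHom)
    (by
      intro a ha
      refine span_vanish (F := fun p => MvPolynomial.aeval (fun _ : Fin (3*m+2) => (0:ℂ)) p)
        (by simp) (fun a b => by simp) ?_ a ha
      rintro x ((⟨i,hi,rfl⟩|⟨i,hi,rfl⟩)|⟨i,j,hij,hj,hns,rfl⟩) q <;> simp)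

lemma eps13_mk_C (m : ℕ) (c : ℂ) : eps13 m (Ideal.Quotient.mk (I13 m) (C c)) = c := by
  rw [eps13, Ideal.Quotient.lift_mk]
  simp

lemma eps13_xs (m : ℕ) (i : Fin (3*m+2)) : eps13 m (xs13 m i) = 0 := by
  rw [eps13, xs13, Ideal.Quotient.lift_mk]
  simp

lemma eps13_surj (m : ℕ) : Function.Surjective (eps13 m) :=
  fun c => ⟨Ideal.Quotient.mk (I13 m) (C c), eps13_mk_C m c⟩

lemma decompose13 (m : ℕ) (hm : 1 ≤ m) (y : A13 m) :
    ∃ c : ℂ, ∃ z ∈ Submodule.span ℂ (Set.range (xs13 m)), y = c • 1 + z := by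
  have hy := b13_span m hm y
  induction hy using Submodule.span_induction with
  | mem x hx =>
    obtain ⟨k, rfl⟩ := hx
    induction k using Fin.lastCases with
    | last => exact ⟨1, 0, zero_mem _, by rw [b13_last]; simp⟩
    | cast k =>
      exact ⟨0, xs13 m k, Submodule.subset_span ⟨k, rfl⟩, by rw [← xs13_eq_b13]; simp⟩
  | zero => exact ⟨0, 0, zero_mem _, by simp⟩
  | add x y _ _ ihx ihy =>
    obtain ⟨c1, z1, hz1, rfl⟩ := ihx
    obtain ⟨c2, z2, hz2, rfl⟩ := ihy
    exact ⟨c1 + c2, z1 + z2, add_mem hz1 hz2, by rw [add_smul]; ring⟩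
  | smul c x _ ih =>
    obtain ⟨c1, z1, hz1, rfl⟩ := ih
    exact ⟨c * c1, c • z1, Submodule.smul_mem _ c hz1, by rw [smul_add, smul_smul]⟩

lemma eps13_span0 (m : ℕ) :
    ∀ z ∈ Submodule.span ℂ (Set.range (xs13 m)), eps13 m z = 0 := by
  intro z hz
  induction hz using Submodule.span_induction with
  | mem x hx => obtain ⟨i, rfl⟩ := hx; exact eps13_xs m i
  | zero => simp
  | add x y _ _ ihx ihy => rw [map_add, ihx, ihy, add_zero]
  | smul c x _ ih =>
    obtain ⟨p, rfl⟩ := Ideal.Quotient.mk_surjective x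
    rw [smul_mk13, map_mul (Ideal.Quotient.mk (I13 m)), map_mul (eps13 m), ih, mul_zero]

lemma ker_eps13 (m : ℕ) (hm : 1 ≤ m) : RingHom.ker (eps13 m) = mm13 m := by
  apply le_antisymm
  · intro y hy
    obtain ⟨c, z, hz, rfl⟩ := decompose13 m hm y
    have hzmm : z ∈ mm13 m := by
      rw [← Submodule.restrictScalars_mem ℂ, mm13_restrict m hm]; exact hz
    have hez : eps13 m z = 0 := eps13_span0 m z hz
    have hc : eps13 m (c • 1) = c := by
      rw [show c • (1 : A13 m) = Ideal.Quotient.mk (I13 m) (C c) from ?_, eps13_mk_C]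
      rw [← map_one (Ideal.Quotient.mk (I13 m)), smul_mk13, mul_one]
    rw [RingHom.mem_ker, map_add, hez, add_zero, hc] at hy
    rw [hy, zero_smul, zero_add]
    exact hzmm
  · rw [mm13_eq, Ideal.span_le]
    rintro x ⟨i, rfl⟩
    rw [SetLike.mem_coe, RingHom.mem_ker]
    exact eps13_xs m i

lemma mm13_max (m : ℕ) (hm : 1 ≤ m) : (mm13 m).IsMaximal := by
  rw [← ker_eps13 m hm]
  exact RingHom.ker_isMaximal_of_surjective (eps13 m) (eps13_surj m)

lemma A13_local (m : ℕ) (hm : 1 ≤ m) : IsLocalRing (A13 m) := by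
  refine IsLocalRing.of_unique_max_ideal ⟨mm13 m, mm13_max m hm, fun J hJ => ?_⟩
  have hle : mm13 m ≤ J := by
    rw [mm13_eq, Ideal.span_le]
    rintro x ⟨i, rfl⟩
    have h3 : xs13 m i ^ 3 = 0 := by
      have hmem : xs13 m i ∈ mm13 m := by
        rw [mm13_eq]; exact Ideal.subset_span ⟨i, rfl⟩
      have : xs13 m i ^ 3 ∈ mm13 m ^ 3 := Ideal.pow_mem_pow hmem 3
      rwa [mm13_cube m hm, Ideal.mem_bot] at this
    rw [SetLike.mem_coe]
    exact hJ.isPrime.mem_of_pow_mem 3 (by rw [h3]; exact zero_mem J)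
  exact ((mm13_max m hm).eq_of_le hJ.ne_top hle).symm

set_option maxHeartbeats 1000000 in
/-- A is a local ℂ-algebra of dimension 3m+3 with Hilbert function (1, 3m, 2). -/
theorem stmt13 (m : ℕ) (hm : 1 ≤ m) :
    IsLocalRing (A13 m) ∧ (mm13 m).IsMaximal ∧
    Module.finrank ℂ (A13 m) = 3*m + 3 ∧
    Module.finrank ℂ (A13 m ⧸ mm13 m) = 1 ∧
    Module.finrank ℂ
      (↥(mm13 m) ⧸ (Submodule.comap (mm13 m).subtype (mm13 m ^ 2))) = 3*m ∧
    Module.finrank ℂ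
      (↥(mm13 m ^ 2) ⧸ (Submodule.comap (mm13 m ^ 2).subtype (mm13 m ^ 3))) = 2 := by
  haveI fdA : FiniteDimensional ℂ (A13 m) := Module.Finite.of_basis (basis13 m hm)
  haveI fdmm : FiniteDimensional ℂ ↥(mm13 m) :=
    FiniteDimensional.of_injective (((mm13 m).subtype).restrictScalars ℂ)
      (Submodule.injective_subtype _)
  haveI fdmm2 : FiniteDimensional ℂ ↥(mm13 m ^ 2) :=
    FiniteDimensional.of_injective (((mm13 m ^ 2).subtype).restrictScalars ℂ)
      (Submodule.injective_subtype _)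
  have hr1 : Module.finrank ℂ ↥((mm13 m).restrictScalars ℂ) = 3*m+2 := by
    exact ((Submodule.restrictScalarsEquiv ℂ (A13 m) (A13 m) (mm13 m)
      ).restrictScalars ℂ).finrank_eq.trans (finrank_mm13 m hm)
  refine ⟨A13_local m hm, mm13_max m hm, finrank_A13 m hm, ?_, ?_, ?_⟩
  · have e : (A13 m ⧸ (mm13 m).restrictScalars ℂ) ≃ₗ[ℂ] A13 m ⧸ mm13 m :=
      Submodule.Quotient.restrictScalarsEquiv ℂ (mm13 m)
    have h := Submodule.finrank_quotient_add_finrank ((mm13 m).restrictScalars ℂ)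
    rw [e.symm.finrank_eq]
    rw [hr1, finrank_A13 m hm] at h
    omega
  · set N := Submodule.comap (mm13 m).subtype (mm13 m ^ 2) with hN
    have h2le : mm13 m ^ 2 ≤ mm13 m := Ideal.pow_le_self two_ne_zero
    have hNr : Module.finrank ℂ ↥(N.restrictScalars ℂ) = 2 := by
      have e1 : ↥(N.restrictScalars ℂ) ≃ₗ[ℂ] ↥N :=
        (Submodule.restrictScalarsEquiv ℂ (A13 m) ↥(mm13 m) N).restrictScalars ℂ
      have e2 : ↥N ≃ₗ[ℂ] ↥(mm13 m ^ 2) :=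
        (Submodule.comapSubtypeEquivOfLe h2le).restrictScalars ℂ
      rw [(e1.trans e2).finrank_eq]
      exact finrank_mm13_sq m hm
    have eq := Submodule.finrank_quotient_add_finrank (N.restrictScalars ℂ)
    have eQ : (↥(mm13 m) ⧸ N) ≃ₗ[ℂ] (↥(mm13 m) ⧸ N.restrictScalars ℂ) :=
      (Submodule.Quotient.restrictScalarsEquiv ℂ N).symm
    have hmr : Module.finrank ℂ ↥(mm13 m) = 3*m+2 := finrank_mm13 m hm
    have hq : Module.finrank ℂ (↥(mm13 m) ⧸ (N.restrictScalars ℂ)) + 2 = 3*m+2 := by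
      rw [hNr, hmr] at eq
      exact eq
    rw [eQ.finrank_eq]
    omega
  · set N2 := Submodule.comap (mm13 m ^ 2).subtype (mm13 m ^ 3) with hN2def
    have hN2 : N2 = ⊥ := by
      rw [hN2def, mm13_cube m hm, Submodule.comap_bot, Submodule.ker_subtype]
    have e3 : (↥(mm13 m ^ 2) ⧸ N2) ≃ₗ[A13 m] ↥(mm13 m ^ 2) :=
      Submodule.quotEquivOfEqBot N2 hN2
    rw [(e3.restrictScalars ℂ).finrank_eq]
    exact finrank_mm13_sq m hm
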